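/- For any privately achievable scheme with zero error and zero leakage, and for any s ∈ {1,...,min(⌊N/2⌋,K)} with ⌊N/s⌋ ≥ 2, the rate satisfies R ≥ (s·⌊N/s⌋ − 1 − (s−1)M)/(⌊N/s⌋ − 1); formally, given random variables satisfying H(W_{[s⌊N/s⌋]} | X_{[⌊N/s⌋]}, Z_{[s]}) = 0, I(Ŵ; X_l, Z_k) = 0, H(X_i) ≤ RF, H(Z_j) ≤ MF, and W_1,...,W_N i.i.d. uniform on F bits, conclude (s⌊N/s⌋−1)F ≤ (⌊N/s⌋−1)RF + (s−1)MF. -/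

import Mathlib

open scoped BigOperators

/-- Probability that random variable `X` takes value `x`, on a finite
probability space with mass function `p`. -/
noncomputable def probOf {Ω α : Type*} [Fintype Ω] [DecidableEq α]
    (p : Ω → ℝ) (X : Ω → α) (x : α) : ℝ :=
  ∑ ω, if X ω = x then p ω else 0

/-- Shannon entropy (in bits) of a random variable on a finite probability space. -/
noncomputable def entropy {Ω α : Type*} [Fintype Ω] [Fintype α] [DecidableEq α]
    (p : Ω → ℝ) (X : Ω → α) : ℝ :=
  -∑ x, probOf p X x * Real.logb 2 (probOf p X x)

/-- Conditional entropy H(X | Y). -/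
noncomputable def condEntropy {Ω α β : Type*} [Fintype Ω] [Fintype α] [DecidableEq α]
    [Fintype β] [DecidableEq β] (p : Ω → ℝ) (X : Ω → α) (Y : Ω → β) : ℝ :=
  entropy p (fun ω => (X ω, Y ω)) - entropy p Y

/-- Mutual information I(X ; Y). -/
noncomputable def mutualInfo {Ω α β : Type*} [Fintype Ω] [Fintype α] [DecidableEq α]
    [Fintype β] [DecidableEq β] (p : Ω → ℝ) (X : Ω → α) (Y : Ω → β) : ℝ :=
  entropy p X - condEntropy p X Y


section helpers
variable {Ω : Type*} [Fintype Ω] {p : Ω → ℝ}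

lemma entropy_def {Ω α : Type*} [Fintype Ω] [Fintype α] [DecidableEq α] (p : Ω → ℝ) (X : Ω → α) :
    entropy p X = -∑ x, probOf p X x * Real.logb 2 (probOf p X x) := rfl


lemma probOf_eq_sum_filter {α : Type*} [DecidableEq α] (X : Ω → α) (x : α) :
    probOf p X x = ∑ ω ∈ Finset.univ.filter (fun ω => X ω = x), p ω := by
  rw [Finset.sum_filter]; rfl

lemma probOf_nonneg (hp0 : ∀ ω, 0 ≤ p ω) {α : Type*} [DecidableEq α] (X : Ω → α) (x : α) :
    0 ≤ probOf p X x := by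
  rw [probOf_eq_sum_filter]; exact Finset.sum_nonneg fun ω _ => hp0 ω

lemma sum_probOf (hp1 : ∑ ω, p ω = 1) {α : Type*} [Fintype α] [DecidableEq α] (X : Ω → α) :
    ∑ x, probOf p X x = 1 := by
  simp only [probOf_eq_sum_filter]
  rw [Finset.sum_fiberwise_eq_sum_filter Finset.univ Finset.univ X p]
  simpa using hp1

/-- marginal of first coordinate -/
lemma probOf_fst {α β : Type*} [Fintype β] [DecidableEq α] [DecidableEq β]
    (X : Ω → α) (Y : Ω → β) (x : α) :
    probOf p X x = ∑ y, probOf p (fun ω => (X ω, Y ω)) (x, y) := by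
  simp only [probOf_eq_sum_filter]
  refine Eq.symm ?_
  calc ∑ y, ∑ ω ∈ Finset.univ.filter (fun ω => (X ω, Y ω) = (x, y)), p ω
      = ∑ y : β, ∑ ω ∈ (Finset.univ.filter (fun ω => X ω = x)).filter (fun ω => Y ω = y), p ω := by
        refine Finset.sum_congr rfl fun y _ => ?_
        congr 1
        ext ω
        simp [Prod.ext_iff, and_comm]
    _ = ∑ ω ∈ Finset.univ.filter (fun ω => X ω = x), p ω := by
        rw [Finset.sum_fiberwise_eq_sum_filter (Finset.univ.filter (fun ω => X ω = x)) Finset.univ Y p]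
        simp

lemma probOf_snd {α β : Type*} [Fintype α] [DecidableEq α] [DecidableEq β]
    (X : Ω → α) (Y : Ω → β) (y : β) :
    probOf p Y y = ∑ x, probOf p (fun ω => (X ω, Y ω)) (x, y) := by
  simp only [probOf_eq_sum_filter]
  refine Eq.symm ?_
  calc ∑ x, ∑ ω ∈ Finset.univ.filter (fun ω => (X ω, Y ω) = (x, y)), p ω
      = ∑ x : α, ∑ ω ∈ (Finset.univ.filter (fun ω => Y ω = y)).filter (fun ω => X ω = x), p ω := by
        refine Finset.sum_congr rfl fun x _ => ?_
        congr 1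
        ext ω
        simp [Prod.ext_iff, and_comm]
    _ = ∑ ω ∈ Finset.univ.filter (fun ω => Y ω = y), p ω := by
        rw [Finset.sum_fiberwise_eq_sum_filter (Finset.univ.filter (fun ω => Y ω = y)) Finset.univ X p]
        simp

lemma probOf_pair_le_fst (hp0 : ∀ ω, 0 ≤ p ω) {α β : Type*} [Fintype β] [DecidableEq α]
    [DecidableEq β] (X : Ω → α) (Y : Ω → β) (x : α) (y : β) :
    probOf p (fun ω => (X ω, Y ω)) (x, y) ≤ probOf p X x := by
  rw [probOf_fst X Y x]
  exact Finset.single_le_sum (f := fun y => probOf p (fun ω => (X ω, Y ω)) (x, y))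
    (fun y _ => probOf_nonneg hp0 _ _) (Finset.mem_univ y)

lemma probOf_pair_le_snd (hp0 : ∀ ω, 0 ≤ p ω) {α β : Type*} [Fintype α] [DecidableEq α]
    [DecidableEq β] (X : Ω → α) (Y : Ω → β) (x : α) (y : β) :
    probOf p (fun ω => (X ω, Y ω)) (x, y) ≤ probOf p Y y := by
  rw [probOf_snd X Y y]
  exact Finset.single_le_sum (f := fun x => probOf p (fun ω => (X ω, Y ω)) (x, y))
    (fun x _ => probOf_nonneg hp0 _ _) (Finset.mem_univ x)

/-- Gibbs-type inequality. -/
lemma gibbs_aux {ι : Type*} [Fintype ι] (r u : ι → ℝ)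
    (hr : ∀ i, 0 ≤ r i) (hu : ∀ i, 0 ≤ u i) (hru : ∀ i, 0 < r i → 0 < u i)
    (hsum : ∑ i, u i ≤ ∑ i, r i) :
    ∑ i, r i * Real.logb 2 (u i) ≤ ∑ i, r i * Real.logb 2 (r i) := by
  have h2 : (0:ℝ) < Real.log 2 := Real.log_pos one_lt_two
  have key : ∑ i, r i * Real.log (u i) ≤ ∑ i, r i * Real.log (r i) := by
    have term : ∀ i, r i * Real.log (u i) ≤ r i * Real.log (r i) + (u i - r i) := by
      intro i
      rcases eq_or_lt_of_le (hr i) with h | h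
      · simp [← h, hu i]
      · have hui := hru i h
        have hlog : Real.log (u i / r i) ≤ u i / r i - 1 :=
          Real.log_le_sub_one_of_pos (div_pos hui h)
        rw [Real.log_div (ne_of_gt hui) (ne_of_gt h)] at hlog
        have := mul_le_mul_of_nonneg_left hlog (hr i)
        have hri : r i ≠ 0 := ne_of_gt h
        rw [mul_sub, mul_sub, mul_div_cancel₀ _ hri] at this
        linarith
    calc ∑ i, r i * Real.log (u i) ≤ ∑ i, (r i * Real.log (r i) + (u i - r i)) :=
          Finset.sum_le_sum fun i _ => term i
      _ = ∑ i, r i * Real.log (r i) + (∑ i, u i - ∑ i, r i) := by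
          rw [Finset.sum_add_distrib, Finset.sum_sub_distrib]
      _ ≤ ∑ i, r i * Real.log (r i) := by linarith
  have := mul_le_mul_of_nonneg_right key (le_of_lt (inv_pos.mpr h2))
  calc ∑ i, r i * Real.logb 2 (u i) = (∑ i, r i * Real.log (u i)) * (Real.log 2)⁻¹ := by
        rw [Finset.sum_mul]; exact Finset.sum_congr rfl fun i _ => by
          rw [Real.logb, div_eq_mul_inv, mul_assoc]
    _ ≤ (∑ i, r i * Real.log (r i)) * (Real.log 2)⁻¹ := this
    _ = ∑ i, r i * Real.logb 2 (r i) := by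
        rw [Finset.sum_mul]; exact Finset.sum_congr rfl fun i _ => by
          rw [Real.logb, div_eq_mul_inv, mul_assoc]


lemma sum_over_fibers {α α' : Type*} [Fintype α] [Fintype α'] [DecidableEq α']
    (f : α → α') (g : α → ℝ) :
    ∑ y, ∑ x ∈ Finset.univ.filter (fun x => f x = y), g x = ∑ x, g x :=
  (Finset.sum_fiberwise_eq_sum_filter Finset.univ Finset.univ f g).trans (by simp)

lemma probOf_comp {α α' : Type*} [Fintype α] [DecidableEq α] [DecidableEq α']
    (X : Ω → α) (f : α → α') (y : α') :
    probOf p (fun ω => f (X ω)) y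
      = ∑ x ∈ Finset.univ.filter (fun x => f x = y), probOf p X x := by
  classical
  simp only [probOf_eq_sum_filter]
  set s := Finset.univ.filter (fun ω : Ω => f (X ω) = y) with hs
  have e1 : ∑ ω ∈ s, p ω = ∑ x : α, ∑ ω ∈ s.filter (fun ω => X ω = x), p ω := by
    rw [Finset.sum_fiberwise_eq_sum_filter s Finset.univ X p]
    simp
  rw [e1]
  have h0 : ∀ x ∈ Finset.univ, x ∉ Finset.univ.filter (fun x => f x = y) →
      (∑ ω ∈ s.filter (fun ω => X ω = x), p ω) = 0 := by
    intro x _ hx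
    simp only [Finset.mem_filter, Finset.mem_univ, true_and] at hx
    refine Finset.sum_eq_zero fun ω hω => ?_
    simp only [hs, Finset.mem_filter, Finset.mem_univ, true_and] at hω
    exact absurd (by rw [← hω.2]; exact hω.1) hx
  rw [← Finset.sum_subset (Finset.subset_univ _) h0]
  refine Finset.sum_congr rfl fun x hx => ?_
  simp only [Finset.mem_filter, Finset.mem_univ, true_and] at hx
  congr 1
  ext ω
  simp only [hs, Finset.mem_filter, Finset.mem_univ, true_and]
  constructor
  · intro h; exact h.2
  · intro h; exact ⟨by rw [h, hx], h⟩

/-- entropy of a deterministic function of X is at most entropy of X -/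
lemma entropy_comp_le (hp0 : ∀ ω, 0 ≤ p ω) {α α' : Type*}
    [Fintype α] [DecidableEq α] [Fintype α'] [DecidableEq α']
    (X : Ω → α) (f : α → α') :
    entropy p (fun ω => f (X ω)) ≤ entropy p X := by
  classical
  rw [entropy_def, entropy_def, neg_le_neg_iff]
  calc ∑ x, probOf p X x * Real.logb 2 (probOf p X x)
      = ∑ y, ∑ x ∈ Finset.univ.filter (fun x => f x = y),
          probOf p X x * Real.logb 2 (probOf p X x) := (sum_over_fibers f _).symm
    _ ≤ ∑ y, probOf p (fun ω => f (X ω)) y * Real.logb 2 (probOf p (fun ω => f (X ω)) y) := by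
        refine Finset.sum_le_sum fun y _ => ?_
        rw [probOf_comp X f y, Finset.sum_mul]
        refine Finset.sum_le_sum fun x hx => ?_
        rcases eq_or_lt_of_le (probOf_nonneg hp0 X x) with h | h
        · rw [← h]; simp
        · refine mul_le_mul_of_nonneg_left ?_ (le_of_lt h)
          refine Real.logb_le_logb_of_le one_lt_two h ?_
          exact Finset.single_le_sum (fun x _ => probOf_nonneg hp0 X x) hx

/-- special form: Y pointwise a function of X -/
lemma entropy_le_of_comp (hp0 : ∀ ω, 0 ≤ p ω) {α α' : Type*}
    [Fintype α] [DecidableEq α] [Fintype α'] [DecidableEq α']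
    (X : Ω → α) (Y : Ω → α') (f : α → α') (hf : ∀ ω, Y ω = f (X ω)) :
    entropy p Y ≤ entropy p X := by
  have : Y = fun ω => f (X ω) := funext hf
  rw [this]
  exact entropy_comp_le hp0 X f

/-- subadditivity -/
lemma entropy_pair_le (hp0 : ∀ ω, 0 ≤ p ω) (hp1 : ∑ ω, p ω = 1) {α β : Type*}
    [Fintype α] [DecidableEq α] [Fintype β] [DecidableEq β]
    (X : Ω → α) (Y : Ω → β) :
    entropy p (fun ω => (X ω, Y ω)) ≤ entropy p X + entropy p Y := by
  classical
  set r : α × β → ℝ := probOf p (fun ω => (X ω, Y ω)) with hr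
  set u : α × β → ℝ := fun z => probOf p X z.1 * probOf p Y z.2 with hu
  have key : ∑ z, r z * Real.logb 2 (u z) ≤ ∑ z, r z * Real.logb 2 (r z) := by
    refine gibbs_aux r u (fun z => probOf_nonneg hp0 _ _)
      (fun z => mul_nonneg (probOf_nonneg hp0 _ _) (probOf_nonneg hp0 _ _)) ?_ ?_
    · rintro ⟨x, y⟩ h
      exact mul_pos (lt_of_lt_of_le h (probOf_pair_le_fst hp0 X Y x y))
        (lt_of_lt_of_le h (probOf_pair_le_snd hp0 X Y x y))
    · rw [Fintype.sum_prod_type]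
      simp only [hu]
      rw [← Finset.sum_mul_sum]
      rw [sum_probOf hp1 X, sum_probOf hp1 Y, sum_probOf hp1 (fun ω => (X ω, Y ω))]
      norm_num
  have term : ∀ z : α × β, r z * Real.logb 2 (u z)
      = r z * Real.logb 2 (probOf p X z.1) + r z * Real.logb 2 (probOf p Y z.2) := by
    rintro ⟨x, y⟩
    rcases eq_or_lt_of_le (probOf_nonneg hp0 (fun ω => (X ω, Y ω)) (x, y)) with h | h
    · have : r (x, y) = 0 := h.symm
      simp [this]
    · have hx : 0 < probOf p X x := lt_of_lt_of_le h (probOf_pair_le_fst hp0 X Y x y)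
      have hy : 0 < probOf p Y y := lt_of_lt_of_le h (probOf_pair_le_snd hp0 X Y x y)
      have : u (x, y) = probOf p X x * probOf p Y y := rfl
      rw [this, Real.logb, Real.log_mul (ne_of_gt hx) (ne_of_gt hy), Real.logb, Real.logb]
      ring
  have s1 : ∑ z : α × β, r z * Real.logb 2 (probOf p X z.1)
      = ∑ x, probOf p X x * Real.logb 2 (probOf p X x) := by
    rw [Fintype.sum_prod_type]
    refine Finset.sum_congr rfl fun x _ => ?_
    calc ∑ y, r (x, y) * Real.logb 2 (probOf p X (x, y).1)
        = (∑ y, r (x, y)) * Real.logb 2 (probOf p X x) := by rw [Finset.sum_mul]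
      _ = probOf p X x * Real.logb 2 (probOf p X x) := by
          rw [hr, ← probOf_fst X Y x]
  have s2 : ∑ z : α × β, r z * Real.logb 2 (probOf p Y z.2)
      = ∑ y, probOf p Y y * Real.logb 2 (probOf p Y y) := by
    rw [Fintype.sum_prod_type_right]
    refine Finset.sum_congr rfl fun y _ => ?_
    calc ∑ x, r (x, y) * Real.logb 2 (probOf p Y (x, y).2)
        = (∑ x, r (x, y)) * Real.logb 2 (probOf p Y y) := by rw [Finset.sum_mul]
      _ = probOf p Y y * Real.logb 2 (probOf p Y y) := by
          rw [hr, ← probOf_snd X Y y]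
  calc entropy p (fun ω => (X ω, Y ω)) = -∑ z, r z * Real.logb 2 (r z) := by
        rw [entropy_def]
    _ ≤ -∑ z, r z * Real.logb 2 (u z) := neg_le_neg key
    _ = -(∑ z : α × β, r z * Real.logb 2 (probOf p X z.1)
          + ∑ z : α × β, r z * Real.logb 2 (probOf p Y z.2)) := by
        rw [← Finset.sum_add_distrib]
        rw [Finset.sum_congr rfl fun z _ => term z]
    _ = entropy p X + entropy p Y := by
        rw [s1, s2, entropy_def, entropy_def]
        ring

/-- entropy of a variable with values in a `Unique` type is zero -/
lemma entropy_unique (hp1 : ∑ ω, p ω = 1) {α : Type*} [Fintype α] [DecidableEq α] [Unique α]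
    (X : Ω → α) : entropy p X = 0 := by
  have h := sum_probOf hp1 X
  rw [Finset.univ_unique, Finset.sum_singleton] at h
  rw [entropy_def, Finset.univ_unique, Finset.sum_singleton, h]
  simp

/-- iterated subadditivity over a finite family -/
lemma entropy_family_le (hp0 : ∀ ω, 0 ≤ p ω) (hp1 : ∑ ω, p ω = 1) {β : Type*}
    [Fintype β] [DecidableEq β] (X : ℕ → Ω → β) (A : Finset ℕ) :
    entropy p (fun ω => fun i : A => X (i : ℕ) ω) ≤ ∑ i ∈ A, entropy p (X i) := by
  classical
  induction A using Finset.induction with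
  | empty =>
      haveI : IsEmpty ((∅ : Finset ℕ) : Type) := Finset.isEmpty_coe_sort.mpr rfl
      rw [entropy_unique hp1]
      simp
  | @insert a B ha ih =>
      have step1 : entropy p (fun ω => fun i : (insert a B : Finset ℕ) => X (i : ℕ) ω)
          ≤ entropy p (fun ω => (X a ω, fun i : B => X (i : ℕ) ω)) := by
        refine entropy_le_of_comp hp0 _ _
          (fun v => fun i : (insert a B : Finset ℕ) =>
            if h : (i : ℕ) = a then v.1 else v.2 ⟨i, Finset.mem_of_mem_insert_of_ne i.2 h⟩)
          (fun ω => ?_)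
        funext i
        by_cases h : (i : ℕ) = a
        · simp [h]
        · simp [h]
      have step2 : entropy p (fun ω => (X a ω, fun i : B => X (i : ℕ) ω))
          ≤ entropy p (X a) + entropy p (fun ω => fun i : B => X (i : ℕ) ω) :=
        entropy_pair_le hp0 hp1 (X a) _
      rw [Finset.sum_insert ha]
      calc entropy p (fun ω => fun i : (insert a B : Finset ℕ) => X (i : ℕ) ω)
          ≤ entropy p (X a) + entropy p (fun ω => fun i : B => X (i : ℕ) ω) :=
            le_trans step1 step2
        _ ≤ entropy p (X a) + ∑ i ∈ B, entropy p (X i) := add_le_add le_rfl ih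

end helpers

/-- Cut-set lower bound for private coded caching: with `n = ⌊N/s⌋` request instances
and `s` users, zero-error recovery, perfect privacy, `H(Xᵢ) ≤ RF` and `H(Zⱼ) ≤ MF`,
one gets `(s⌊N/s⌋ − 1)F ≤ (⌊N/s⌋ − 1)RF + (s − 1)MF`. -/
theorem private_caching_cutset_bound
    {Ω α β γ : Type*} [Fintype Ω] [Fintype α] [DecidableEq α]
    [Fintype β] [DecidableEq β] [Fintype γ] [DecidableEq γ]
    (p : Ω → ℝ) (hp0 : ∀ ω, 0 ≤ p ω) (hp1 : ∑ ω, p ω = 1)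
    (N K s : ℕ) (F R M : ℝ) (hF : 0 < F)
    (hs1 : 1 ≤ s) (hs2 : s ≤ min (N / 2) K) (hn2 : 2 ≤ N / s)
    (W : ℕ → Ω → α) (X : ℕ → Ω → β) (Z : ℕ → Ω → γ)
    -- the files W₁,…,W_N are i.i.d. uniform on F bits: any subcollection has
    -- joint entropy (number of files)·F
    (hWiid : ∀ A : Finset ℕ, A ⊆ Finset.range N →
      entropy p (fun ω => fun i : A => W i ω) = A.card * F)
    -- recovery: all demanded files are determined by all transmissions and caches
    (hrec : condEntropy p (fun ω => fun i : Finset.range (s * (N / s)) => W (i : ℕ) ω)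
      (fun ω => (fun i : Finset.range (N / s) => X (i : ℕ) ω,
                 fun j : Finset.range s => Z (j : ℕ) ω)) = 0)
    -- privacy: (Xₗ, Z_k) reveal nothing about the files other than the one
    -- demanded by user k in request instance l (0-indexed: index l·s + k)
    (hpriv : ∀ l k : ℕ, l < N / s → k < s →
      mutualInfo p
        (fun ω => fun i : ((Finset.range (s * (N / s))).erase (l * s + k)) => W (i : ℕ) ω)
        (fun ω => (X l ω, Z k ω)) = 0)
    (hX : ∀ i, entropy p (X i) ≤ R * F)
    (hZ : ∀ j, entropy p (Z j) ≤ M * F) :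
    ((s * (N / s) : ℕ) - 1 : ℝ) * F ≤ ((N / s : ℕ) - 1 : ℝ) * R * F + ((s : ℝ) - 1) * M * F := by
  classical
  have hnpos : 0 < N / s := by omega
  have hspos : 0 < s := by omega
  have hsnpos : 0 < s * (N / s) := Nat.mul_pos hspos hnpos
  have h0n : (0 : ℕ) ∈ Finset.range (N / s) := Finset.mem_range.mpr hnpos
  have h0s : (0 : ℕ) ∈ Finset.range s := Finset.mem_range.mpr hspos
  have h0sn : (0 * s + 0 : ℕ) ∈ Finset.range (s * (N / s)) := Finset.mem_range.mpr (by omega)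
  have hpriv0 := hpriv 0 0 hnpos hspos
  simp only [mutualInfo, condEntropy] at hpriv0
  have hrec' := hrec
  simp only [condEntropy] at hrec'
  have hsnN : s * (N / s) ≤ N := by
    rw [Nat.mul_comm]; exact Nat.div_mul_le_self N s
  have eWh : entropy p
      (fun ω => fun i : ((Finset.range (s * (N / s))).erase (0 * s + 0)) => W (i : ℕ) ω)
      = ((s * (N / s) : ℕ) - 1 : ℝ) * F := by
    have hsub : (Finset.range (s * (N / s))).erase (0 * s + 0) ⊆ Finset.range N :=
      (Finset.erase_subset _ _).trans (Finset.range_subset_range.mpr hsnN)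
    have h := hWiid _ hsub
    rw [h, Finset.card_erase_of_mem h0sn, Finset.card_range, Nat.cast_sub (by omega)]
    norm_num
  have e3 : entropy p (fun ω =>
        ((fun i : ((Finset.range (s * (N / s))).erase (0 * s + 0)) => W (i : ℕ) ω), (X 0 ω, Z 0 ω)))
      ≤ entropy p (fun ω =>
        ((fun i : Finset.range (s * (N / s)) => W (i : ℕ) ω),
         ((fun i : Finset.range (N / s) => X (i : ℕ) ω),
          (fun j : Finset.range s => Z (j : ℕ) ω)))) := by
    exact entropy_le_of_comp hp0 _ _
      (fun v => ((fun i : ((Finset.range (s * (N / s))).erase (0 * s + 0)) =>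
          v.1 ⟨(i : ℕ), Finset.mem_of_mem_erase i.2⟩),
        (v.2.1 ⟨0, h0n⟩, v.2.2 ⟨0, h0s⟩))) (fun ω => rfl)
  have e5 : entropy p (fun ω =>
        ((fun i : Finset.range (N / s) => X (i : ℕ) ω),
         (fun j : Finset.range s => Z (j : ℕ) ω)))
      ≤ entropy p (fun ω => ((X 0 ω, Z 0 ω),
         ((fun i : ((Finset.range (N / s)).erase 0) => X (i : ℕ) ω),
          (fun j : ((Finset.range s).erase 0) => Z (j : ℕ) ω)))) := by
    refine entropy_le_of_comp hp0 _ _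
      (fun v => ((fun i : Finset.range (N / s) =>
           if h : (i : ℕ) = 0 then v.1.1
           else v.2.1 ⟨(i : ℕ), Finset.mem_erase.mpr ⟨h, i.2⟩⟩),
          (fun j : Finset.range s =>
           if h : (j : ℕ) = 0 then v.1.2
           else v.2.2 ⟨(j : ℕ), Finset.mem_erase.mpr ⟨h, j.2⟩⟩)))
      (fun ω => ?_)
    refine Prod.ext ?_ ?_
    · funext i
      by_cases h : (i : ℕ) = 0 <;> simp [h]
    · funext j
      by_cases h : (j : ℕ) = 0 <;> simp [h]
  have e6 : entropy p (fun ω => ((X 0 ω, Z 0 ω),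
         ((fun i : ((Finset.range (N / s)).erase 0) => X (i : ℕ) ω),
          (fun j : ((Finset.range s).erase 0) => Z (j : ℕ) ω))))
      ≤ entropy p (fun ω => (X 0 ω, Z 0 ω))
        + entropy p (fun ω =>
         ((fun i : ((Finset.range (N / s)).erase 0) => X (i : ℕ) ω),
          (fun j : ((Finset.range s).erase 0) => Z (j : ℕ) ω))) :=
    entropy_pair_le hp0 hp1 _ _
  have e7 : entropy p (fun ω =>
         ((fun i : ((Finset.range (N / s)).erase 0) => X (i : ℕ) ω),
          (fun j : ((Finset.range s).erase 0) => Z (j : ℕ) ω)))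
      ≤ entropy p (fun ω => fun i : ((Finset.range (N / s)).erase 0) => X (i : ℕ) ω)
        + entropy p (fun ω => fun j : ((Finset.range s).erase 0) => Z (j : ℕ) ω) :=
    entropy_pair_le hp0 hp1 _ _
  have e8x : entropy p (fun ω => fun i : ((Finset.range (N / s)).erase 0) => X (i : ℕ) ω)
      ≤ ∑ i ∈ (Finset.range (N / s)).erase 0, entropy p (X i) :=
    entropy_family_le hp0 hp1 X _
  have e8z : entropy p (fun ω => fun j : ((Finset.range s).erase 0) => Z (j : ℕ) ω)
      ≤ ∑ j ∈ (Finset.range s).erase 0, entropy p (Z j) :=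
    entropy_family_le hp0 hp1 Z _
  have e9x : ∑ i ∈ (Finset.range (N / s)).erase 0, entropy p (X i)
      ≤ ((N / s : ℕ) - 1 : ℝ) * R * F := by
    calc ∑ i ∈ (Finset.range (N / s)).erase 0, entropy p (X i)
        ≤ ∑ _i ∈ (Finset.range (N / s)).erase 0, R * F :=
          Finset.sum_le_sum fun i _ => hX i
      _ = ((Finset.range (N / s)).erase 0).card • (R * F) := by rw [Finset.sum_const]
      _ = ((N / s : ℕ) - 1 : ℝ) * R * F := by
          rw [Finset.card_erase_of_mem h0n, Finset.card_range, nsmul_eq_mul,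
            Nat.cast_sub (by omega)]
          push_cast
          ring
  have e9z : ∑ j ∈ (Finset.range s).erase 0, entropy p (Z j)
      ≤ ((s : ℝ) - 1) * M * F := by
    calc ∑ j ∈ (Finset.range s).erase 0, entropy p (Z j)
        ≤ ∑ _j ∈ (Finset.range s).erase 0, M * F :=
          Finset.sum_le_sum fun j _ => hZ j
      _ = ((Finset.range s).erase 0).card • (M * F) := by rw [Finset.sum_const]
      _ = ((s : ℝ) - 1) * M * F := by
          rw [Finset.card_erase_of_mem h0s, Finset.card_range, nsmul_eq_mul,
            Nat.cast_sub (by omega)]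
          push_cast
          ring
  linarith [eWh, hpriv0, e3, hrec', e5, e6, e7, e8x, e8z, e9x, e9z]
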